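/- Let A, B be finite sets of integers with min(A)=min(B)=0, |A|=|B|, gcd(A)=gcd(B)=1, and suppose h₁ < ... < h_m are positive integers with |h_iA| > |h_iB| for odd i and |h_iA| < |h_iB| for even i. Let N = max(max A, max B). Then for any integers α, β > h_m N, r ≥ 2, and any positive integer h < min(α,β)/N, the sets A' = ⋃_{j=0}^{r-1}(jα + A) and B' = ⋃_{j=0}^{r-1}(jβ + B) satisfy |hA'| = (h(r-1)+1)|hA| and |hB'| = (h(r-1)+1)|hB|; in particular |h_iA'| > |h_iB'| for odd i ≤ m and |h_iA'| < |h_iB'| for even i ≤ m. -/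

import Mathlib

open Finset Pointwise

/-- `hsum h A` is the `h`-fold sumset of `A` (pointwise sum of `h` copies). -/
def hsum (h : ℕ) (A : Finset ℤ) : Finset ℤ := ∑ _i ∈ Finset.range h, A

/-- `transl t A` is the translate `t + A`. -/
def transl (t : ℤ) (A : Finset ℤ) : Finset ℤ := A.image (t + ·)

lemma hsum_zero (A : Finset ℤ) : hsum 0 A = {0} := by
  simp [hsum]
  rfl

lemma hsum_succ (h : ℕ) (A : Finset ℤ) : hsum (h+1) A = hsum h A + A := by
  simp only [hsum, Finset.sum_range_succ]

lemma mem_transl {t x : ℤ} {X : Finset ℤ} : x ∈ transl t X ↔ ∃ a ∈ X, t + a = x := by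
  simp only [transl, Finset.mem_image]

lemma transl_card (t : ℤ) (X : Finset ℤ) : (transl t X).card = X.card :=
  Finset.card_image_of_injective _ (add_right_injective t)

lemma mem_hsum_succ {x : ℤ} {h : ℕ} {A : Finset ℤ} :
    x ∈ hsum (h+1) A ↔ ∃ p ∈ hsum h A, ∃ a ∈ A, p + a = x := by
  rw [hsum_succ, Finset.mem_add]

lemma hsum_biUnion (A : Finset ℤ) (α : ℤ) (r : ℕ) (hr : 1 ≤ r) (h : ℕ) :
    hsum h ((Finset.range r).biUnion fun j => transl ((j:ℤ)*α) A) =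
    (Finset.range (h*(r-1)+1)).biUnion fun s => transl ((s:ℤ)*α) (hsum h A) := by
  induction h with
  | zero =>
      simp only [Nat.zero_mul, Nat.zero_add, Finset.range_one, Finset.biUnion_singleton,
        hsum_zero]
      ext x
      simp [mem_transl, eq_comm]
  | succ h ih =>
      have hKe : (h+1)*(r-1) = h*(r-1) + (r-1) := by ring
      ext x
      rw [mem_hsum_succ]
      constructor
      · rintro ⟨p, hp, a, ha, rfl⟩
        rw [ih] at hp
        simp only [Finset.mem_biUnion, Finset.mem_range, mem_transl] at hp ha ⊢
        obtain ⟨s, hs, q, hq, rfl⟩ := hp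
        obtain ⟨j, hj, b, hb, rfl⟩ := ha
        refine ⟨s + j, by omega, q + b, ?_, by push_cast; ring⟩
        exact mem_hsum_succ.mpr ⟨q, hq, b, hb, rfl⟩
      · simp only [Finset.mem_biUnion, Finset.mem_range, mem_transl]
        rintro ⟨t, ht, q, hq, rfl⟩
        rw [mem_hsum_succ] at hq
        obtain ⟨p, hp, b, hb, rfl⟩ := hq
        rw [hKe] at ht
        set j := min t (r-1) with hj
        refine ⟨(↑(t-j))*α + p, ?_, (↑j)*α + b, ?_, ?_⟩
        · rw [ih]
          have hrange : t - j ∈ Finset.range (h*(r-1)+1) := Finset.mem_range.mpr (by omega)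
          rw [Finset.mem_biUnion]
          exact ⟨t-j, hrange, mem_transl.mpr ⟨p, hp, rfl⟩⟩
        · exact ⟨j, by omega, b, hb, rfl⟩
        · have h1 : ((t-j:ℕ):ℤ) = (t:ℤ) - j := by
            have : j ≤ t := min_le_left _ _
            push_cast [Nat.cast_sub this]
            ring
          rw [h1]; ring

lemma hsum_bounds {A : Finset ℤ} {M : ℤ} (hA : ∀ a ∈ A, 0 ≤ a ∧ a ≤ M)
    (h : ℕ) : ∀ x ∈ hsum h A, 0 ≤ x ∧ x ≤ (h:ℤ) * M := by
  induction h with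
  | zero => intro x hx; rw [hsum_zero, Finset.mem_singleton] at hx; simp [hx]
  | succ h ih =>
      intro x hx
      rw [mem_hsum_succ] at hx
      obtain ⟨p, hp, a, ha, rfl⟩ := hx
      obtain ⟨hp0, hpM⟩ := ih p hp
      obtain ⟨ha0, haM⟩ := hA a ha
      constructor
      · linarith
      · push_cast; linarith

lemma card_biUnion_transl (X : Finset ℤ) (α M : ℤ) (n : ℕ)
    (hX : ∀ x ∈ X, 0 ≤ x ∧ x ≤ M) (hM : 0 ≤ M) (hMα : M < α) :
    ((Finset.range n).biUnion fun s => transl ((s:ℤ)*α) X).card = n * X.card := by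
  rw [Finset.card_biUnion]
  · simp [transl_card]
  · intro s hs t ht hst
    rw [Function.onFun, Finset.disjoint_left]
    intro x hx hx'
    rw [mem_transl] at hx hx'
    obtain ⟨a, ha, rfl⟩ := hx
    obtain ⟨b, hb, hba⟩ := hx'
    obtain ⟨ha0, haM⟩ := hX a ha
    obtain ⟨hb0, hbM⟩ := hX b hb
    have hα : (0:ℤ) < α := lt_of_le_of_lt hM hMα
    rcases lt_or_gt_of_ne hst with hlt | hlt
    · have h1 : (s:ℤ) + 1 ≤ t := by exact_mod_cast hlt
      nlinarith
    · have h1 : (t:ℤ) + 1 ≤ s := by exact_mod_cast hlt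
      nlinarith

lemma key_card (A : Finset ℤ) (α N : ℤ) (r h : ℕ) (hr : 1 ≤ r)
    (hA : ∀ a ∈ A, 0 ≤ a ∧ a ≤ N) (hN : 0 ≤ N) (hhα : (h:ℤ) * N < α) :
    (hsum h ((Finset.range r).biUnion fun j => transl ((j:ℤ)*α) A)).card =
      (h * (r-1) + 1) * (hsum h A).card := by
  rw [hsum_biUnion A α r hr h]
  exact card_biUnion_transl _ α ((h:ℤ)*N) _ (hsum_bounds hA h)
    (by positivity) hhα

theorem stmt_11 (A B : Finset ℤ) (hAne : A.Nonempty) (hBne : B.Nonempty)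
    (hminA : A.min' hAne = 0) (hminB : B.min' hBne = 0)
    (hcard : A.card = B.card) (hgcdA : A.gcd id = 1) (hgcdB : B.gcd id = 1)
    (m : ℕ) (hs : ℕ → ℕ) (hmono : StrictMonoOn hs (Finset.Icc 1 m))
    (hpos : ∀ i, 1 ≤ i → i ≤ m → 0 < hs i)
    (hrace : ∀ i, 1 ≤ i → i ≤ m →
      (Odd i → (hsum (hs i) B).card < (hsum (hs i) A).card) ∧
      (Even i → (hsum (hs i) A).card < (hsum (hs i) B).card))
    (N : ℤ) (hN : N = max (A.max' hAne) (B.max' hBne))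
    (α β : ℤ) (hα : (hs m : ℤ) * N < α) (hβ : (hs m : ℤ) * N < β)
    (r : ℕ) (hr : 2 ≤ r) :
    (∀ h : ℕ, 0 < h → (h : ℤ) * N < min α β →
        (hsum h ((Finset.range r).biUnion fun j => transl ((j : ℤ) * α) A)).card =
            (h * (r - 1) + 1) * (hsum h A).card ∧
        (hsum h ((Finset.range r).biUnion fun j => transl ((j : ℤ) * β) B)).card =
            (h * (r - 1) + 1) * (hsum h B).card) ∧
    (∀ i, 1 ≤ i → i ≤ m →
      (Odd i →
        (hsum (hs i) ((Finset.range r).biUnion fun j => transl ((j : ℤ) * β) B)).card <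
        (hsum (hs i) ((Finset.range r).biUnion fun j => transl ((j : ℤ) * α) A)).card) ∧
      (Even i →
        (hsum (hs i) ((Finset.range r).biUnion fun j => transl ((j : ℤ) * α) A)).card <
        (hsum (hs i) ((Finset.range r).biUnion fun j => transl ((j : ℤ) * β) B)).card)) := by
  have hr1 : 1 ≤ r := by omega
  have hAb : ∀ a ∈ A, 0 ≤ a ∧ a ≤ N := by
    intro a ha
    refine ⟨hminA ▸ A.min'_le a ha, le_trans (A.le_max' a ha) ?_⟩
    rw [hN]; exact le_max_left _ _
  have hBb : ∀ b ∈ B, 0 ≤ b ∧ b ≤ N := by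
    intro b hb
    refine ⟨hminB ▸ B.min'_le b hb, le_trans (B.le_max' b hb) ?_⟩
    rw [hN]; exact le_max_right _ _
  have hN0 : 0 ≤ N := by
    have := (hAb _ (A.min'_mem hAne)).1
    have := (hAb _ (A.min'_mem hAne)).2
    linarith
  have part1 : ∀ h : ℕ, 0 < h → (h : ℤ) * N < min α β →
      (hsum h ((Finset.range r).biUnion fun j => transl ((j : ℤ) * α) A)).card =
          (h * (r - 1) + 1) * (hsum h A).card ∧
      (hsum h ((Finset.range r).biUnion fun j => transl ((j : ℤ) * β) B)).card =
          (h * (r - 1) + 1) * (hsum h B).card := by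
    intro h _ hmin
    rw [lt_min_iff] at hmin
    exact ⟨key_card A α N r h hr1 hAb hN0 hmin.1, key_card B β N r h hr1 hBb hN0 hmin.2⟩
  refine ⟨part1, ?_⟩
  intro i hi1 him
  have hile : hs i ≤ hs m := by
    rcases eq_or_lt_of_le him with rfl | hlt
    · exact le_refl _
    · exact le_of_lt (hmono (Finset.mem_Icc.mpr ⟨hi1, him⟩)
        (Finset.mem_Icc.mpr ⟨le_trans hi1 him, le_refl m⟩) hlt)
  have hmin : ((hs i : ℤ)) * N < min α β := by
    have hle : ((hs i : ℤ)) * N ≤ (hs m : ℤ) * N :=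
      mul_le_mul_of_nonneg_right (by exact_mod_cast hile) hN0
    exact lt_min (lt_of_le_of_lt hle hα) (lt_of_le_of_lt hle hβ)
  obtain ⟨eA, eB⟩ := part1 (hs i) (hpos i hi1 him) hmin
  obtain ⟨hodd, heven⟩ := hrace i hi1 him
  have hk : 0 < hs i * (r - 1) + 1 := Nat.succ_le_of_lt (Nat.zero_lt_succ _) |>.trans_eq rfl
  constructor
  · intro ho
    rw [eA, eB]
    exact mul_lt_mul_of_pos_left (hodd ho) (by omega)
  · intro he
    rw [eA, eB]
    exact mul_lt_mul_of_pos_left (heven he) (by omega)
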